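/- Let ℓ ≥ 1 and consider the system with N = 2ℓ+1 equally spaced energy levels and uniform dipole moments: iH₀' = ε Σ_{m=1}^{ℓ} m·h_m (ε ≠ 0) and iH₁ = δ Σ_{m=1}^{ℓ} y_m (δ ≠ 0) in the so(2ℓ+1) basis. Then the Lie algebra generated by iH₀' and iH₁ contains all the generators x_m, y_m, h_m for 1 ≤ m ≤ ℓ. -/

import Mathlib

open Matrix

attribute [local instance 100] LieRing.ofAssociativeRing

/-- The `N×N` standard matrix unit `e_{a,b}` (1-based indices). -/
noncomputable def e (N a b : ℕ) : Matrix (Fin N) (Fin N) ℂ :=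
  Matrix.of fun i j => if (i : ℕ) + 1 = a ∧ (j : ℕ) + 1 = b then 1 else 0

/-- `x_{a,b} = e_{a,b} - e_{b,a}`. -/
noncomputable def X (N a b : ℕ) : Matrix (Fin N) (Fin N) ℂ := e N a b - e N b a

/-- `y_{a,b} = i (e_{a,b} + e_{b,a})`. -/
noncomputable def Y (N a b : ℕ) : Matrix (Fin N) (Fin N) ℂ :=
  Complex.I • (e N a b + e N b a)

/-- Cartan generator of `so(2ℓ+1)`: `h_m = i (e_{m+1,m+1} - e_{m+ℓ+1,m+ℓ+1})`. -/
noncomputable def hB (l m : ℕ) : Matrix (Fin (2 * l + 1)) (Fin (2 * l + 1)) ℂ :=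
  Complex.I • (e (2 * l + 1) (m + 1) (m + 1) - e (2 * l + 1) (m + l + 1) (m + l + 1))

/-- Generators `x_m` of `so(2ℓ+1)`: `x₁ = x_{ε₁}`, `x_{m+1} = x_{ε_m - ε_{m+1}}`. -/
noncomputable def xB (l m : ℕ) : Matrix (Fin (2 * l + 1)) (Fin (2 * l + 1)) ℂ :=
  if m = 1 then X (2 * l + 1) 1 2 - X (2 * l + 1) (l + 2) 1
  else X (2 * l + 1) (m + 1) m - X (2 * l + 1) (m + l) (m + l + 1)

/-- Generators `y_m` of `so(2ℓ+1)`: `y₁ = y_{ε₁}`, `y_{m+1} = y_{ε_m - ε_{m+1}}`. -/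
noncomputable def yB (l m : ℕ) : Matrix (Fin (2 * l + 1)) (Fin (2 * l + 1)) ℂ :=
  if m = 1 then Y (2 * l + 1) 1 2 - Y (2 * l + 1) (l + 2) 1
  else Y (2 * l + 1) (m + 1) m - Y (2 * l + 1) (m + l) (m + l + 1)

/-! ### Auxiliary material -/

lemma e_mul (N a b c d : ℕ) :
    e N a b * e N c d = if b = c ∧ 1 ≤ b ∧ b ≤ N then e N a d else 0 := by
  ext i j
  rw [Matrix.mul_apply]
  by_cases h : b = c ∧ 1 ≤ b ∧ b ≤ N
  · obtain ⟨rfl, hb1, hbN⟩ := h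
    have hbf : b - 1 < N := by omega
    rw [Finset.sum_eq_single (⟨b - 1, hbf⟩ : Fin N)]
    · have hb : (b:ℕ) - 1 + 1 = b := by omega
      simp only [e, of_apply, hb, if_pos (⟨rfl, hb1, hbN⟩ : b = b ∧ 1 ≤ b ∧ b ≤ N)]
      by_cases h1 : (i:ℕ) + 1 = a <;> by_cases h2 : (j:ℕ) + 1 = d <;>
        simp [h1, h2, hb1, hbN]
    · intro k _ hk
      have : (k:ℕ) + 1 ≠ b := by
        intro hkb; apply hk; ext; simp; omega
      simp [e, of_apply, this]
    · intro h; exact absurd (Finset.mem_univ _) h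
  · have hz : ∀ k : Fin N, (e N a b) i k * (e N c d) k j = 0 := by
      intro k
      have hk := k.isLt
      simp only [e, of_apply]
      split_ifs with h1 h2 h2
      · exact absurd ⟨by omega, by omega, by omega⟩ h
      · ring
      · ring
      · ring
    simp only [hz, Finset.sum_const_zero, if_neg h, Matrix.zero_apply]

/-- Diagonal generator `i e_{a,a}`. -/
noncomputable def Hd (N a : ℕ) : Matrix (Fin N) (Fin N) ℂ := Complex.I • e N a a

section brackets
variable {N a b c d : ℕ}

lemma Y_symm : Y N a b = Y N b a := by simp [Y, add_comm]
lemma X_swap : X N b a = -X N a b := by simp [X]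

lemma lie_H_Y_left (ha1 : 1 ≤ a) (haN : a ≤ N) (hb1 : 1 ≤ b) (hbN : b ≤ N)
    (hab : a ≠ b) : ⁅Hd N a, Y N a b⁆ = -X N a b := by
  rw [Ring.lie_def]
  simp only [X, Y, Hd, smul_mul_assoc, mul_smul_comm, add_mul, mul_add, sub_mul,
    mul_sub, e_mul]
  simp [ha1, haN, hb1, hbN, hab, hab.symm, smul_smul, Complex.I_mul_I]
  try module

lemma lie_H_Y_right (ha1 : 1 ≤ a) (haN : a ≤ N) (hb1 : 1 ≤ b) (hbN : b ≤ N)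
    (hab : a ≠ b) : ⁅Hd N b, Y N a b⁆ = X N a b := by
  rw [Ring.lie_def]
  simp only [X, Y, Hd, smul_mul_assoc, mul_smul_comm, add_mul, mul_add, sub_mul,
    mul_sub, e_mul]
  simp [ha1, haN, hb1, hbN, hab, hab.symm, smul_smul, Complex.I_mul_I]
  try module

lemma lie_H_X_left (ha1 : 1 ≤ a) (haN : a ≤ N) (hb1 : 1 ≤ b) (hbN : b ≤ N)
    (hab : a ≠ b) : ⁅Hd N a, X N a b⁆ = Y N a b := by
  rw [Ring.lie_def]
  simp only [X, Y, Hd, smul_mul_assoc, mul_smul_comm, add_mul, mul_add, sub_mul,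
    mul_sub, e_mul]
  simp [ha1, haN, hb1, hbN, hab, hab.symm, smul_smul, Complex.I_mul_I]
  try module

lemma lie_H_X_right (ha1 : 1 ≤ a) (haN : a ≤ N) (hb1 : 1 ≤ b) (hbN : b ≤ N)
    (hab : a ≠ b) : ⁅Hd N b, X N a b⁆ = -Y N a b := by
  rw [Ring.lie_def]
  simp only [X, Y, Hd, smul_mul_assoc, mul_smul_comm, add_mul, mul_add, sub_mul,
    mul_sub, e_mul]
  simp [ha1, haN, hb1, hbN, hab, hab.symm, smul_smul, Complex.I_mul_I]
  try module

lemma lie_H_Y_zero (hab : a ≠ b) (hac : a ≠ c) : ⁅Hd N a, Y N b c⁆ = 0 := by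
  rw [Ring.lie_def]
  simp only [X, Y, Hd, smul_mul_assoc, mul_smul_comm, add_mul, mul_add, sub_mul,
    mul_sub, e_mul]
  simp [hab, hab.symm, hac, hac.symm]

lemma lie_H_X_zero (hab : a ≠ b) (hac : a ≠ c) : ⁅Hd N a, X N b c⁆ = 0 := by
  rw [Ring.lie_def]
  simp only [X, Y, Hd, smul_mul_assoc, mul_smul_comm, add_mul, mul_add, sub_mul,
    mul_sub, e_mul]
  simp [hab, hab.symm, hac, hac.symm]

lemma lie_Y_X_same (ha1 : 1 ≤ a) (haN : a ≤ N) (hb1 : 1 ≤ b) (hbN : b ≤ N)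
    (hab : a ≠ b) : ⁅Y N a b, X N a b⁆ = (-2 : ℂ) • (Hd N a - Hd N b) := by
  rw [Ring.lie_def]
  simp only [X, Y, Hd, smul_mul_assoc, mul_smul_comm, add_mul, mul_add, sub_mul,
    mul_sub, e_mul]
  simp [ha1, haN, hb1, hbN, hab, hab.symm, smul_smul, Complex.I_mul_I]
  try module

lemma lie_Y_X_share_bc (ha1 : 1 ≤ a) (haN : a ≤ N) (hb1 : 1 ≤ b) (hbN : b ≤ N)
    (hc1 : 1 ≤ c) (hcN : c ≤ N) (hab : a ≠ b) (hac : a ≠ c) (hbc : b ≠ c) :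
    ⁅Y N a b, X N b c⁆ = Y N a c := by
  rw [Ring.lie_def]
  simp only [X, Y, Hd, smul_mul_assoc, mul_smul_comm, add_mul, mul_add, sub_mul,
    mul_sub, e_mul]
  simp [ha1, haN, hb1, hbN, hc1, hcN, hab, hab.symm, hac, hac.symm, hbc, hbc.symm,
    smul_smul, Complex.I_mul_I]
  try module

lemma lie_Y_X_share_ac (ha1 : 1 ≤ a) (haN : a ≤ N) (hb1 : 1 ≤ b) (hbN : b ≤ N)
    (hc1 : 1 ≤ c) (hcN : c ≤ N) (hab : a ≠ b) (hac : a ≠ c) (hbc : b ≠ c) :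
    ⁅Y N a b, X N a c⁆ = Y N b c := by
  rw [Ring.lie_def]
  simp only [X, Y, Hd, smul_mul_assoc, mul_smul_comm, add_mul, mul_add, sub_mul,
    mul_sub, e_mul]
  simp [ha1, haN, hb1, hbN, hc1, hcN, hab, hab.symm, hac, hac.symm, hbc, hbc.symm,
    smul_smul, Complex.I_mul_I]
  try module

lemma lie_Y_X_share_cb (ha1 : 1 ≤ a) (haN : a ≤ N) (hb1 : 1 ≤ b) (hbN : b ≤ N)
    (hc1 : 1 ≤ c) (hcN : c ≤ N) (hab : a ≠ b) (hac : a ≠ c) (hbc : b ≠ c) :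
    ⁅Y N a b, X N c b⁆ = -Y N a c := by
  rw [show X N c b = -X N b c from X_swap, lie_neg,
    lie_Y_X_share_bc ha1 haN hb1 hbN hc1 hcN hab hac hbc]

lemma lie_Y_X_share_ca (ha1 : 1 ≤ a) (haN : a ≤ N) (hb1 : 1 ≤ b) (hbN : b ≤ N)
    (hc1 : 1 ≤ c) (hcN : c ≤ N) (hab : a ≠ b) (hac : a ≠ c) (hbc : b ≠ c) :
    ⁅Y N a b, X N c a⁆ = -Y N b c := by
  rw [show X N c a = -X N a c from X_swap, lie_neg,
    lie_Y_X_share_ac ha1 haN hb1 hbN hc1 hcN hab hac hbc]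

lemma lie_Y_X_disjoint (hac : a ≠ c) (had : a ≠ d) (hbc : b ≠ c) (hbd : b ≠ d) :
    ⁅Y N a b, X N c d⁆ = 0 := by
  rw [Ring.lie_def]
  simp only [X, Y, Hd, smul_mul_assoc, mul_smul_comm, add_mul, mul_add, sub_mul,
    mul_sub, e_mul]
  simp [hac, hac.symm, had, had.symm, hbc, hbc.symm, hbd, hbd.symm]

end brackets

/-- index of the site `-m` -/
def ni (l m : ℕ) : ℕ := if m = 0 then 1 else m + l + 1
lemma ni_zero (l : ℕ) : ni l 0 = 1 := rfl
lemma ni_eq (l : ℕ) {m : ℕ} (h : m ≠ 0) : ni l m = m + l + 1 := by simp [ni, h]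

noncomputable def uu (l m : ℕ) : Matrix (Fin (2*l+1)) (Fin (2*l+1)) ℂ :=
  X (2*l+1) (m+1) m + X (2*l+1) (ni l m) (ni l (m-1))
noncomputable def vv (l m : ℕ) : Matrix (Fin (2*l+1)) (Fin (2*l+1)) ℂ :=
  Y (2*l+1) (m+1) m - Y (2*l+1) (ni l m) (ni l (m-1))
noncomputable def hh (l m : ℕ) : Matrix (Fin (2*l+1)) (Fin (2*l+1)) ℂ :=
  Hd (2*l+1) (m+1) - Hd (2*l+1) (ni l m)
noncomputable def RR (l m : ℕ) : Matrix (Fin (2*l+1)) (Fin (2*l+1)) ℂ :=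
  Y (2*l+1) (m+2) m - Y (2*l+1) (ni l (m+1)) (ni l (m-1))

lemma hh_zero (l : ℕ) : hh l 0 = 0 := by simp [hh, ni_zero]

/-! ### Relations with the given generators -/

lemma hB_eq (l m : ℕ) (hm : 1 ≤ m) : hB l m = hh l m := by
  unfold hB hh Hd
  rw [ni_eq l (by omega : m ≠ 0), smul_sub]

lemma yB_eq (l m : ℕ) (hm : 1 ≤ m) : yB l m = vv l m := by
  unfold yB vv
  rcases eq_or_ne m 1 with rfl | hm2
  · rw [if_pos rfl, ni_eq l (by omega : (1:ℕ) ≠ 0), show (1:ℕ) - 1 = 0 from rfl, ni_zero,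
      show (1:ℕ) + l + 1 = l + 2 by omega, show (1:ℕ) + 1 = 2 from rfl,
      show Y (2*l+1) 1 2 = Y (2*l+1) 2 1 from Y_symm]
  · rw [if_neg hm2, ni_eq l (by omega : m ≠ 0), ni_eq l (by omega : m - 1 ≠ 0),
      show m - 1 + l + 1 = m + l by omega,
      show Y (2*l+1) (m+l) (m+l+1) = Y (2*l+1) (m+l+1) (m+l) from Y_symm]

lemma xB_one (l : ℕ) : xB l 1 = -uu l 1 := by
  unfold xB uu
  rw [if_pos rfl, ni_eq l (by omega : (1:ℕ) ≠ 0), show (1:ℕ) - 1 = 0 from rfl, ni_zero,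
    show (1:ℕ) + l + 1 = l + 2 by omega, show (1:ℕ) + 1 = 2 from rfl,
    show X (2*l+1) 1 2 = -X (2*l+1) 2 1 from X_swap]
  abel

lemma xB_eq (l m : ℕ) (hm : 2 ≤ m) : xB l m = uu l m := by
  unfold xB uu
  rw [if_neg (by omega), ni_eq l (by omega : m ≠ 0), ni_eq l (by omega : m - 1 ≠ 0),
    show m - 1 + l + 1 = m + l by omega,
    show X (2*l+1) (m+l) (m+l+1) = -X (2*l+1) (m+l+1) (m+l) from X_swap]
  abel

/-! ### Per-pair bracket computations -/

lemma A1 (l m : ℕ) (hm1 : 1 ≤ m) (hml : m ≤ l) :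
    ⁅hh l m, vv l m⁆ = -uu l m := by
  unfold hh vv uu
  rw [ni_eq l (by omega : m ≠ 0)]
  rcases eq_or_ne m 1 with rfl | hm2
  · rw [show (1:ℕ) - 1 = 0 from rfl, ni_zero]
    simp only [sub_lie, lie_sub]
    rw [lie_H_Y_left (by omega) (by omega) (by omega) (by omega) (by omega),
        lie_H_Y_zero (by omega) (by omega),
        lie_H_Y_zero (by omega) (by omega),
        lie_H_Y_left (by omega) (by omega) (by omega) (by omega) (by omega)]
    abel
  · rw [ni_eq l (by omega : m - 1 ≠ 0), show m - 1 + l + 1 = m + l by omega]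
    simp only [sub_lie, lie_sub]
    rw [lie_H_Y_left (by omega) (by omega) (by omega) (by omega) (by omega),
        lie_H_Y_zero (by omega) (by omega),
        lie_H_Y_zero (by omega) (by omega),
        lie_H_Y_left (by omega) (by omega) (by omega) (by omega) (by omega)]
    abel

lemma A2 (l k : ℕ) (hk1 : 1 ≤ k) (hkl : k + 1 ≤ l) :
    ⁅hh l k, vv l (k+1)⁆ = uu l (k+1) := by
  unfold hh vv uu
  rw [show k + 1 - 1 = k from rfl, ni_eq l (by omega : k ≠ 0),
    ni_eq l (by omega : k + 1 ≠ 0)]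
  simp only [sub_lie, lie_sub]
  rw [lie_H_Y_right (by omega) (by omega) (by omega) (by omega) (by omega),
      lie_H_Y_zero (by omega) (by omega),
      lie_H_Y_zero (by omega) (by omega),
      lie_H_Y_right (by omega) (by omega) (by omega) (by omega) (by omega)]
  abel

lemma A3 (l k m : ℕ) (hk1 : 1 ≤ k) (hkl : k ≤ l) (hm1 : 1 ≤ m) (hml : m ≤ l)
    (h1 : k ≠ m) (h2 : k + 1 ≠ m) : ⁅hh l k, vv l m⁆ = 0 := by
  unfold hh vv
  rw [ni_eq l (by omega : k ≠ 0), ni_eq l (by omega : m ≠ 0)]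
  rcases eq_or_ne m 1 with rfl | hm2
  · rw [show (1:ℕ) - 1 = 0 from rfl, ni_zero]
    simp only [sub_lie, lie_sub]
    rw [lie_H_Y_zero (by omega) (by omega), lie_H_Y_zero (by omega) (by omega),
        lie_H_Y_zero (by omega) (by omega), lie_H_Y_zero (by omega) (by omega)]
    abel
  · rw [ni_eq l (by omega : m - 1 ≠ 0), show m - 1 + l + 1 = m + l by omega]
    simp only [sub_lie, lie_sub]
    rw [lie_H_Y_zero (by omega) (by omega), lie_H_Y_zero (by omega) (by omega),
        lie_H_Y_zero (by omega) (by omega), lie_H_Y_zero (by omega) (by omega)]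
    abel

lemma B1 (l m : ℕ) (hm1 : 1 ≤ m) (hml : m ≤ l) :
    ⁅hh l m, uu l m⁆ = vv l m := by
  unfold hh uu vv
  rw [ni_eq l (by omega : m ≠ 0)]
  rcases eq_or_ne m 1 with rfl | hm2
  · rw [show (1:ℕ) - 1 = 0 from rfl, ni_zero]
    simp only [sub_lie, lie_add]
    rw [lie_H_X_left (by omega) (by omega) (by omega) (by omega) (by omega),
        lie_H_X_zero (by omega) (by omega),
        lie_H_X_zero (by omega) (by omega),
        lie_H_X_left (by omega) (by omega) (by omega) (by omega) (by omega)]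
    abel
  · rw [ni_eq l (by omega : m - 1 ≠ 0), show m - 1 + l + 1 = m + l by omega]
    simp only [sub_lie, lie_add]
    rw [lie_H_X_left (by omega) (by omega) (by omega) (by omega) (by omega),
        lie_H_X_zero (by omega) (by omega),
        lie_H_X_zero (by omega) (by omega),
        lie_H_X_left (by omega) (by omega) (by omega) (by omega) (by omega)]
    abel

lemma B2 (l k : ℕ) (hk1 : 1 ≤ k) (hkl : k + 1 ≤ l) :
    ⁅hh l k, uu l (k+1)⁆ = -vv l (k+1) := by
  unfold hh uu vv
  rw [show k + 1 - 1 = k from rfl, ni_eq l (by omega : k ≠ 0),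
    ni_eq l (by omega : k + 1 ≠ 0)]
  simp only [sub_lie, lie_add]
  rw [lie_H_X_right (by omega) (by omega) (by omega) (by omega) (by omega),
      lie_H_X_zero (by omega) (by omega),
      lie_H_X_zero (by omega) (by omega),
      lie_H_X_right (by omega) (by omega) (by omega) (by omega) (by omega)]
  abel

lemma B3 (l k m : ℕ) (hk1 : 1 ≤ k) (hkl : k ≤ l) (hm1 : 1 ≤ m) (hml : m ≤ l)
    (h1 : k ≠ m) (h2 : k + 1 ≠ m) : ⁅hh l k, uu l m⁆ = 0 := by
  unfold hh uu
  rw [ni_eq l (by omega : k ≠ 0), ni_eq l (by omega : m ≠ 0)]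
  rcases eq_or_ne m 1 with rfl | hm2
  · rw [show (1:ℕ) - 1 = 0 from rfl, ni_zero]
    simp only [sub_lie, lie_add]
    rw [lie_H_X_zero (by omega) (by omega), lie_H_X_zero (by omega) (by omega),
        lie_H_X_zero (by omega) (by omega), lie_H_X_zero (by omega) (by omega)]
    abel
  · rw [ni_eq l (by omega : m - 1 ≠ 0), show m - 1 + l + 1 = m + l by omega]
    simp only [sub_lie, lie_add]
    rw [lie_H_X_zero (by omega) (by omega), lie_H_X_zero (by omega) (by omega),
        lie_H_X_zero (by omega) (by omega), lie_H_X_zero (by omega) (by omega)]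
    abel

lemma C1 (l m : ℕ) (hm1 : 1 ≤ m) (hml : m ≤ l) :
    ⁅vv l m, uu l m⁆ = (-2 : ℂ) • hh l m + (2 : ℂ) • hh l (m-1) := by
  unfold vv uu hh
  rw [ni_eq l (by omega : m ≠ 0)]
  rcases eq_or_ne m 1 with rfl | hm2
  · rw [show (1:ℕ) - 1 = 0 from rfl, ni_zero]
    simp only [sub_lie, lie_add]
    rw [lie_Y_X_same (by omega) (by omega) (by omega) (by omega) (by omega),
        lie_Y_X_share_cb (by omega) (by omega) (by omega) (by omega) (by omega)
          (by omega) (by omega) (by omega) (by omega),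
        lie_Y_X_share_cb (by omega) (by omega) (by omega) (by omega) (by omega)
          (by omega) (by omega) (by omega) (by omega),
        lie_Y_X_same (by omega) (by omega) (by omega) (by omega) (by omega)]
    rw [show Y (2*l+1) (1+l+1) (1+1) = Y (2*l+1) (1+1) (1+l+1) from Y_symm,
        show (0:ℕ) + 1 = 1 from rfl]
    module
  · rw [ni_eq l (by omega : m - 1 ≠ 0), show m - 1 + l + 1 = m + l by omega,
      show m - 1 + 1 = m by omega]
    simp only [sub_lie, lie_add]
    rw [lie_Y_X_same (by omega) (by omega) (by omega) (by omega) (by omega),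
        lie_Y_X_disjoint (by omega) (by omega) (by omega) (by omega),
        lie_Y_X_disjoint (by omega) (by omega) (by omega) (by omega),
        lie_Y_X_same (by omega) (by omega) (by omega) (by omega) (by omega)]
    module

lemma C2 (l m : ℕ) (hm1 : 1 ≤ m) (hml : m + 1 ≤ l) :
    ⁅vv l (m+1), uu l m⁆ = RR l m := by
  unfold vv uu RR
  rw [show m + 1 - 1 = m from rfl, ni_eq l (by omega : m + 1 ≠ 0),
    ni_eq l (by omega : m ≠ 0), show m + 1 + 1 = m + 2 by omega]
  rcases eq_or_ne m 1 with rfl | hm2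
  · rw [show (1:ℕ) - 1 = 0 from rfl, ni_zero]
    simp only [sub_lie, lie_add]
    rw [lie_Y_X_share_bc (by omega) (by omega) (by omega) (by omega) (by omega)
          (by omega) (by omega) (by omega) (by omega),
        lie_Y_X_disjoint (by omega) (by omega) (by omega) (by omega),
        lie_Y_X_disjoint (by omega) (by omega) (by omega) (by omega),
        lie_Y_X_share_bc (by omega) (by omega) (by omega) (by omega) (by omega)
          (by omega) (by omega) (by omega) (by omega)]
    abel
  · rw [ni_eq l (by omega : m - 1 ≠ 0), show m - 1 + l + 1 = m + l by omega]
    simp only [sub_lie, lie_add]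
    rw [lie_Y_X_share_bc (by omega) (by omega) (by omega) (by omega) (by omega)
          (by omega) (by omega) (by omega) (by omega),
        lie_Y_X_disjoint (by omega) (by omega) (by omega) (by omega),
        lie_Y_X_disjoint (by omega) (by omega) (by omega) (by omega),
        lie_Y_X_share_bc (by omega) (by omega) (by omega) (by omega) (by omega)
          (by omega) (by omega) (by omega) (by omega)]
    abel

lemma C3 (l m : ℕ) (hm1 : 1 ≤ m) (hml : m + 1 ≤ l) :
    ⁅vv l m, uu l (m+1)⁆ = -RR l m := by
  unfold vv uu RR
  rw [show m + 1 - 1 = m from rfl, ni_eq l (by omega : m + 1 ≠ 0),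
    ni_eq l (by omega : m ≠ 0), show m + 1 + 1 = m + 2 by omega]
  rcases eq_or_ne m 1 with rfl | hm2
  · rw [show (1:ℕ) - 1 = 0 from rfl, ni_zero]
    simp only [sub_lie, lie_add]
    rw [lie_Y_X_share_ca (by omega) (by omega) (by omega) (by omega) (by omega)
          (by omega) (by omega) (by omega) (by omega),
        lie_Y_X_disjoint (by omega) (by omega) (by omega) (by omega),
        lie_Y_X_disjoint (by omega) (by omega) (by omega) (by omega),
        lie_Y_X_share_ca (by omega) (by omega) (by omega) (by omega) (by omega)
          (by omega) (by omega) (by omega) (by omega)]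
    rw [show Y (2*l+1) 1 (1+2) = Y (2*l+1) (1+2) 1 from Y_symm,
        show Y (2*l+1) 1 (1+1+l+1) = Y (2*l+1) (1+1+l+1) 1 from Y_symm]
    abel
  · rw [ni_eq l (by omega : m - 1 ≠ 0), show m - 1 + l + 1 = m + l by omega]
    simp only [sub_lie, lie_add]
    rw [lie_Y_X_share_ca (by omega) (by omega) (by omega) (by omega) (by omega)
          (by omega) (by omega) (by omega) (by omega),
        lie_Y_X_disjoint (by omega) (by omega) (by omega) (by omega),
        lie_Y_X_disjoint (by omega) (by omega) (by omega) (by omega),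
        lie_Y_X_share_ca (by omega) (by omega) (by omega) (by omega) (by omega)
          (by omega) (by omega) (by omega) (by omega)]
    rw [show Y (2*l+1) m (m+2) = Y (2*l+1) (m+2) m from Y_symm,
        show Y (2*l+1) (m+l) (m+1+l+1) = Y (2*l+1) (m+1+l+1) (m+l) from Y_symm]
    abel

lemma C4 (l k m : ℕ) (hk1 : 1 ≤ k) (hkl : k ≤ l) (hm1 : 1 ≤ m) (hml : m ≤ l)
    (hfar : k + 1 < m ∨ m + 1 < k) : ⁅vv l k, uu l m⁆ = 0 := by
  unfold vv uu
  rw [ni_eq l (by omega : k ≠ 0), ni_eq l (by omega : m ≠ 0)]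
  rcases eq_or_ne k 1 with rfl | hk2 <;> rcases eq_or_ne m 1 with rfl | hm2
  · omega
  · rw [show (1:ℕ) - 1 = 0 from rfl, ni_zero,
      ni_eq l (by omega : m - 1 ≠ 0), show m - 1 + l + 1 = m + l by omega]
    simp only [sub_lie, lie_add]
    rw [lie_Y_X_disjoint (by omega) (by omega) (by omega) (by omega),
        lie_Y_X_disjoint (by omega) (by omega) (by omega) (by omega),
        lie_Y_X_disjoint (by omega) (by omega) (by omega) (by omega),
        lie_Y_X_disjoint (by omega) (by omega) (by omega) (by omega)]
    abel
  · rw [show (1:ℕ) - 1 = 0 from rfl, ni_zero,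
      ni_eq l (by omega : k - 1 ≠ 0), show k - 1 + l + 1 = k + l by omega]
    simp only [sub_lie, lie_add]
    rw [lie_Y_X_disjoint (by omega) (by omega) (by omega) (by omega),
        lie_Y_X_disjoint (by omega) (by omega) (by omega) (by omega),
        lie_Y_X_disjoint (by omega) (by omega) (by omega) (by omega),
        lie_Y_X_disjoint (by omega) (by omega) (by omega) (by omega)]
    abel
  · rw [ni_eq l (by omega : k - 1 ≠ 0), show k - 1 + l + 1 = k + l by omega,
      ni_eq l (by omega : m - 1 ≠ 0), show m - 1 + l + 1 = m + l by omega]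
    simp only [sub_lie, lie_add]
    rw [lie_Y_X_disjoint (by omega) (by omega) (by omega) (by omega),
        lie_Y_X_disjoint (by omega) (by omega) (by omega) (by omega),
        lie_Y_X_disjoint (by omega) (by omega) (by omega) (by omega),
        lie_Y_X_disjoint (by omega) (by omega) (by omega) (by omega)]
    abel

/-! ### Summation helpers -/

lemma sum_lie' {ι : Type*} (s : Finset ι) {n : ℕ}
    (f : ι → Matrix (Fin n) (Fin n) ℂ) (y : Matrix (Fin n) (Fin n) ℂ) :
    ⁅∑ i ∈ s, f i, y⁆ = ∑ i ∈ s, ⁅f i, y⁆ := by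
  simp only [Ring.lie_def, Finset.sum_mul, Finset.mul_sum, ← Finset.sum_sub_distrib]

lemma lie_sum' {ι : Type*} (s : Finset ι) {n : ℕ}
    (f : ι → Matrix (Fin n) (Fin n) ℂ) (y : Matrix (Fin n) (Fin n) ℂ) :
    ⁅y, ∑ i ∈ s, f i⁆ = ∑ i ∈ s, ⁅y, f i⁆ := by
  simp only [Ring.lie_def, Finset.sum_mul, Finset.mul_sum, ← Finset.sum_sub_distrib]

lemma sum_pair_support {M : Type*} [AddCommGroup M] (l m : ℕ) (hm1 : 1 ≤ m) (hml : m ≤ l)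
    (f : ℕ → M) (h0 : f 0 = 0)
    (hz : ∀ k, 1 ≤ k → k ≤ l → k ≠ m → k + 1 ≠ m → f k = 0) :
    ∑ k ∈ Finset.Icc 1 l, f k = f (m-1) + f m := by
  have step1 : ∑ k ∈ Finset.Icc 1 l, f k = ∑ k ∈ Finset.Icc 0 l, f k := by
    apply Finset.sum_subset
    · intro x hx; simp only [Finset.mem_Icc] at hx ⊢; omega
    · intro x hx hnx
      simp only [Finset.mem_Icc] at hx hnx
      have : x = 0 := by omega
      subst this; exact h0
  rw [step1, ← Finset.sum_subset (show ({m-1, m} : Finset ℕ) ⊆ Finset.Icc 0 l by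
      intro x hx; simp only [Finset.mem_insert, Finset.mem_singleton] at hx
      simp only [Finset.mem_Icc]; omega)]
  · rw [Finset.sum_pair (by omega : m - 1 ≠ m)]
  · intro x hx hnx
    simp only [Finset.mem_Icc] at hx
    simp only [Finset.mem_insert, Finset.mem_singleton, not_or] at hnx
    rcases Nat.eq_zero_or_pos x with rfl | hx1
    · exact h0
    · exact hz x hx1 hx.2 hnx.2 (by omega)

lemma sum_pair_support' {M : Type*} [AddCommGroup M] (l m : ℕ) (hm1 : 1 ≤ m) (hml : m ≤ l)
    (g : ℕ → M) (hz : ∀ k, 1 ≤ k → k ≤ l → k ≠ m → k ≠ m + 1 → g k = 0) :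
    ∑ k ∈ Finset.Icc 1 l, g k = g m + (if m + 1 ≤ l then g (m+1) else 0) := by
  rcases le_or_gt (m+1) l with h | h
  · rw [if_pos h, ← Finset.sum_subset (show ({m, m+1} : Finset ℕ) ⊆ Finset.Icc 1 l by
        intro x hx; simp only [Finset.mem_insert, Finset.mem_singleton] at hx
        simp only [Finset.mem_Icc]; omega)]
    · rw [Finset.sum_pair (by omega : m ≠ m + 1)]
    · intro x hx hnx
      simp only [Finset.mem_Icc] at hx
      simp only [Finset.mem_insert, Finset.mem_singleton, not_or] at hnx
      exact hz x hx.1 hx.2 hnx.1 hnx.2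
  · rw [if_neg (by omega), add_zero]
    apply Finset.sum_eq_single
    · intro k hk hkm
      simp only [Finset.mem_Icc] at hk
      exact hz k hk.1 hk.2 hkm (by omega)
    · intro hm; simp only [Finset.mem_Icc] at hm; omega

lemma sum_triple_support {M : Type*} [AddCommGroup M] (l k : ℕ) (hk1 : 1 ≤ k) (hkl : k ≤ l)
    (g : ℕ → M)
    (hz : ∀ m, 1 ≤ m → m ≤ l → m + 1 ≠ k → m ≠ k → m ≠ k + 1 → g m = 0) :
    ∑ m ∈ Finset.Icc 1 l, g m =
      (if 2 ≤ k then g (k-1) else 0) + g k + (if k + 1 ≤ l then g (k+1) else 0) := by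
  rcases le_or_gt 2 k with h2 | h2 <;> rcases le_or_gt (k+1) l with h3 | h3
  · rw [if_pos h2, if_pos h3, ← Finset.sum_subset
      (show ({k-1, k, k+1} : Finset ℕ) ⊆ Finset.Icc 1 l by
        intro x hx
        simp only [Finset.mem_insert, Finset.mem_singleton] at hx
        simp only [Finset.mem_Icc]; omega)]
    · rw [Finset.sum_insert (by
        simp only [Finset.mem_insert, Finset.mem_singleton]; omega),
        Finset.sum_pair (by omega : k ≠ k + 1)]
      abel
    · intro x hx hnx
      simp only [Finset.mem_Icc] at hx
      simp only [Finset.mem_insert, Finset.mem_singleton, not_or] at hnx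
      exact hz x hx.1 hx.2 (by omega) hnx.2.1 hnx.2.2
  · rw [if_pos h2, if_neg (by omega), add_zero, ← Finset.sum_subset
      (show ({k-1, k} : Finset ℕ) ⊆ Finset.Icc 1 l by
        intro x hx
        simp only [Finset.mem_insert, Finset.mem_singleton] at hx
        simp only [Finset.mem_Icc]; omega)]
    · rw [Finset.sum_pair (by omega : k - 1 ≠ k)]
    · intro x hx hnx
      simp only [Finset.mem_Icc] at hx
      simp only [Finset.mem_insert, Finset.mem_singleton, not_or] at hnx
      exact hz x hx.1 hx.2 (by omega) hnx.2 (by omega)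
  · rw [if_neg (by omega), if_pos h3, zero_add, ← Finset.sum_subset
      (show ({k, k+1} : Finset ℕ) ⊆ Finset.Icc 1 l by
        intro x hx
        simp only [Finset.mem_insert, Finset.mem_singleton] at hx
        simp only [Finset.mem_Icc]; omega)]
    · rw [Finset.sum_pair (by omega : k ≠ k + 1)]
    · intro x hx hnx
      simp only [Finset.mem_Icc] at hx
      simp only [Finset.mem_insert, Finset.mem_singleton, not_or] at hnx
      exact hz x hx.1 hx.2 (by omega) hnx.1 hnx.2
  · rw [if_neg (by omega), if_neg (by omega), zero_add, add_zero]
    apply Finset.sum_eq_single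
    · intro x hx hxk
      simp only [Finset.mem_Icc] at hx
      exact hz x hx.1 hx.2 (by omega) hxk (by omega)
    · intro hm; simp only [Finset.mem_Icc] at hm; omega

/-! ### Key bracket identities with the sums -/

lemma key1 (l m : ℕ) (hm1 : 1 ≤ m) (hml : m ≤ l) :
    ⁅∑ k ∈ Finset.Icc 1 l, (k:ℝ) • hh l k, vv l m⁆ = -uu l m := by
  rw [sum_lie',
    sum_pair_support l m hm1 hml _ (by simp [hh_zero]) (fun k hk1 hkl hne hne2 => by
      rw [smul_lie, A3 l k m hk1 hkl hm1 hml hne hne2, smul_zero])]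
  rcases eq_or_ne m 1 with rfl | hm2
  · rw [show (1:ℕ) - 1 = 0 from rfl]
    rw [smul_lie, smul_lie, A1 l 1 (by omega) hml]
    simp [hh_zero]
  · have hA2 := A2 l (m-1) (by omega) (by omega)
    rw [show m - 1 + 1 = m by omega] at hA2
    rw [smul_lie, smul_lie, A1 l m hm1 hml, hA2]
    have : ((m - 1 : ℕ) : ℝ) = (m : ℝ) - 1 := by
      push_cast [Nat.cast_sub hm1]; ring
    rw [this]
    module

lemma key2 (l m : ℕ) (hm1 : 1 ≤ m) (hml : m ≤ l) :
    ⁅∑ k ∈ Finset.Icc 1 l, (k:ℝ) • hh l k, uu l m⁆ = vv l m := by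
  rw [sum_lie',
    sum_pair_support l m hm1 hml _ (by simp [hh_zero]) (fun k hk1 hkl hne hne2 => by
      rw [smul_lie, B3 l k m hk1 hkl hm1 hml hne hne2, smul_zero])]
  rcases eq_or_ne m 1 with rfl | hm2
  · rw [show (1:ℕ) - 1 = 0 from rfl]
    rw [smul_lie, smul_lie, B1 l 1 (by omega) hml]
    simp [hh_zero]
  · have hB2 := B2 l (m-1) (by omega) (by omega)
    rw [show m - 1 + 1 = m by omega] at hB2
    rw [smul_lie, smul_lie, B1 l m hm1 hml, hB2]
    have : ((m - 1 : ℕ) : ℝ) = (m : ℝ) - 1 := by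
      push_cast [Nat.cast_sub hm1]; ring
    rw [this]
    module

lemma key3 (l m : ℕ) (hm1 : 1 ≤ m) (hml : m ≤ l) :
    ⁅hh l m, ∑ k ∈ Finset.Icc 1 l, vv l k⁆ =
      (if m + 1 ≤ l then uu l (m+1) else 0) - uu l m := by
  rw [lie_sum',
    sum_pair_support' l m hm1 hml _ (fun k hk1 hkl hne hne2 =>
      A3 l m k hm1 hml hk1 hkl (fun h => hne h.symm) (fun h => hne2 h.symm))]
  rw [A1 l m hm1 hml]
  split_ifs with h
  · rw [A2 l m hm1 h]; abel
  · abel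

lemma key4 (l : ℕ) (hl : 1 ≤ l) :
    ⁅∑ k ∈ Finset.Icc 1 l, vv l k, ∑ m ∈ Finset.Icc 1 l, uu l m⁆ =
      (-2 : ℂ) • hh l l := by
  set f : ℕ → Matrix (Fin (2*l+1)) (Fin (2*l+1)) ℂ :=
    fun j => (2:ℂ) • hh l j + (if 1 ≤ j ∧ j < l then RR l j else 0) with hf
  rw [sum_lie']
  have hG : ∀ k ∈ Finset.Icc 1 l, ⁅vv l k, ∑ m ∈ Finset.Icc 1 l, uu l m⁆ =
      f (k-1) - f k := by
    intro k hk
    simp only [Finset.mem_Icc] at hk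
    rw [lie_sum', sum_triple_support l k hk.1 hk.2 _ (fun m h1 h2 hna hnb hnc =>
      C4 l k m hk.1 hk.2 h1 h2 (by omega))]
    rcases eq_or_ne k 1 with rfl | hk2
    · rw [if_neg (by omega), C1 l 1 (by omega) hk.2]
      rcases le_or_gt 2 l with hll | hll
      · rw [if_pos (by omega), C3 l 1 (by omega) (by omega)]
        simp only [hf]
        rw [if_neg (by omega), if_pos (by omega), show (1:ℕ) - 1 = 0 from rfl, hh_zero]
        module
      · rw [if_neg (by omega)]
        simp only [hf]
        rw [if_neg (by omega), if_neg (by omega), show (1:ℕ) - 1 = 0 from rfl, hh_zero]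
        module
    · rw [if_pos (by omega)]
      have hC2 := C2 l (k-1) (by omega) (by omega : k - 1 + 1 ≤ l)
      rw [show k - 1 + 1 = k by omega] at hC2
      rw [hC2, C1 l k hk.1 hk.2]
      rcases le_or_gt (k+1) l with hkl2 | hkl2
      · rw [if_pos hkl2, C3 l k (by omega) hkl2]
        simp only [hf]
        rw [if_pos (by omega), if_pos (by omega)]
        module
      · rw [if_neg (by omega)]
        simp only [hf]
        rw [if_pos (by omega), if_neg (by omega)]
        module
  rw [Finset.sum_congr rfl hG,
    show Finset.Icc 1 l = Finset.Ico 1 (l+1) from (Finset.Ico_add_one_right_eq_Icc 1 l).symm,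
    Finset.sum_Ico_eq_sum_range]
  rw [Finset.sum_congr rfl (fun i _ => by
    rw [show 1 + i - 1 = i by omega, show 1 + i = i + 1 by omega])]
  rw [show l + 1 - 1 = l from rfl, Finset.sum_range_sub' f l]
  simp only [hf]
  rw [if_neg (by omega), if_neg (by omega), hh_zero]
  module

/-- for the system with `N = 2ℓ+1` equally spaced energy levels
and uniform dipole moments, `iH₀' = ε Σ_{m=1}^ℓ m·h_m` (`ε ≠ 0`),
`iH₁ = δ Σ_{m=1}^ℓ y_m` (`δ ≠ 0`), the Lie algebra generated by `iH₀'` and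
`iH₁` contains all generators `x_m`, `y_m`, `h_m` for `1 ≤ m ≤ ℓ`. -/
theorem equally_spaced_so_generators_mem (l : ℕ) (hl : 1 ≤ l) (ε δ : ℝ)
    (hε : ε ≠ 0) (hδ : δ ≠ 0)
    (H0 H1 : Matrix (Fin (2 * l + 1)) (Fin (2 * l + 1)) ℂ)
    (hH0 : H0 = ε • ∑ m ∈ Finset.Icc 1 l, (m : ℝ) • hB l m)
    (hH1 : H1 = δ • ∑ m ∈ Finset.Icc 1 l, yB l m) :
    ∀ m, 1 ≤ m → m ≤ l →
      xB l m ∈ LieSubalgebra.lieSpan ℝ (Matrix (Fin (2 * l + 1)) (Fin (2 * l + 1)) ℂ)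
          {H0, H1} ∧
      yB l m ∈ LieSubalgebra.lieSpan ℝ (Matrix (Fin (2 * l + 1)) (Fin (2 * l + 1)) ℂ)
          {H0, H1} ∧
      hB l m ∈ LieSubalgebra.lieSpan ℝ (Matrix (Fin (2 * l + 1)) (Fin (2 * l + 1)) ℂ)
          {H0, H1} := by
  set K := LieSubalgebra.lieSpan ℝ (Matrix (Fin (2 * l + 1)) (Fin (2 * l + 1)) ℂ)
    {H0, H1} with hK
  have creal : ∀ (r : ℝ) (A : Matrix (Fin (2*l+1)) (Fin (2*l+1)) ℂ),
      ((r:ℂ)) • A = r • A := by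
    intro r A
    rw [show ((r:ℂ)) = algebraMap ℝ ℂ r from rfl, algebraMap_smul]
  -- H0, H1 are in K
  have hH0mem : H0 ∈ K := LieSubalgebra.subset_lieSpan (Set.mem_insert _ _)
  have hH1mem : H1 ∈ K := LieSubalgebra.subset_lieSpan (Set.mem_insert_of_mem _ rfl)
  -- rewrite H0, H1 in terms of hh, vv
  have hH0' : H0 = ε • ∑ k ∈ Finset.Icc 1 l, (k:ℝ) • hh l k := by
    rw [hH0]; congr 1
    refine Finset.sum_congr rfl (fun k hk => ?_)
    rw [hB_eq l k (Finset.mem_Icc.mp hk).1]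
  have hVmem : (∑ k ∈ Finset.Icc 1 l, vv l k) ∈ K := by
    have hH1' : H1 = δ • ∑ k ∈ Finset.Icc 1 l, vv l k := by
      rw [hH1]; congr 1
      refine Finset.sum_congr rfl (fun k hk => ?_)
      rw [yB_eq l k (Finset.mem_Icc.mp hk).1]
    have h1 := K.smul_mem δ⁻¹ hH1mem
    rw [hH1', smul_smul, inv_mul_cancel₀ hδ, one_smul] at h1
    exact h1
  have hUmem : (∑ m ∈ Finset.Icc 1 l, uu l m) ∈ K := by
    have hbr : ⁅∑ k ∈ Finset.Icc 1 l, (k:ℝ) • hh l k, ∑ m ∈ Finset.Icc 1 l, vv l m⁆ =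
        -∑ m ∈ Finset.Icc 1 l, uu l m := by
      rw [lie_sum', Finset.sum_congr rfl (fun m hm =>
        key1 l m (Finset.mem_Icc.mp hm).1 (Finset.mem_Icc.mp hm).2)]
      exact Finset.sum_neg_distrib (f := uu l)
    have h2 : ⁅H0, ∑ k ∈ Finset.Icc 1 l, vv l k⁆ ∈ K := K.lie_mem hH0mem hVmem
    rw [hH0', smul_lie, hbr] at h2
    have h3 := K.smul_mem ε⁻¹ h2
    rw [smul_smul, inv_mul_cancel₀ hε, one_smul] at h3
    have h4 := K.smul_mem (-1 : ℝ) h3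
    rwa [neg_one_smul, neg_neg] at h4
  -- h_l is in K
  have hhl : hh l l ∈ K := by
    have h5 : ⁅∑ k ∈ Finset.Icc 1 l, vv l k, ∑ m ∈ Finset.Icc 1 l, uu l m⁆ ∈ K :=
      K.lie_mem hVmem hUmem
    rw [key4 l hl, show ((-2:ℂ)) = (((-2:ℝ):ℂ)) by norm_num, creal] at h5
    have h6 := K.smul_mem (-2:ℝ)⁻¹ h5
    rwa [smul_smul, inv_mul_cancel₀ (by norm_num : (-2:ℝ) ≠ 0), one_smul] at h6
  -- the downward step
  have step : ∀ mm, 1 ≤ mm → mm ≤ l → hh l mm ∈ K →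
      (mm + 1 ≤ l → uu l (mm+1) ∈ K) →
      uu l mm ∈ K ∧ vv l mm ∈ K ∧ hh l (mm-1) ∈ K := by
    intro mm h1 h2 hhmem hnext
    have hu : uu l mm ∈ K := by
      have heq : uu l mm = (if mm + 1 ≤ l then uu l (mm+1) else 0) -
          ⁅hh l mm, ∑ k ∈ Finset.Icc 1 l, vv l k⁆ := by
        rw [key3 l mm h1 h2]; abel
      rw [heq]
      refine K.sub_mem ?_ (K.lie_mem hhmem hVmem)
      split_ifs with h
      · exact hnext h
      · exact K.zero_mem
    have hv : vv l mm ∈ K := by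
      have h7 : ⁅H0, uu l mm⁆ ∈ K := K.lie_mem hH0mem hu
      rw [hH0', smul_lie, key2 l mm h1 h2] at h7
      have h8 := K.smul_mem ε⁻¹ h7
      rwa [smul_smul, inv_mul_cancel₀ hε, one_smul] at h8
    have hprev : hh l (mm-1) ∈ K := by
      have heq : (2:ℝ) • hh l (mm-1) =
          ⁅vv l mm, uu l mm⁆ + (2:ℝ) • hh l mm := by
        rw [C1 l mm h1 h2, ← creal 2, ← creal 2]
        push_cast
        module
      have h9 : (2:ℝ) • hh l (mm-1) ∈ K := by
        rw [heq]
        exact K.add_mem (K.lie_mem hv hu) (K.smul_mem 2 hhmem)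
      have h10 := K.smul_mem (2:ℝ)⁻¹ h9
      rwa [smul_smul, inv_mul_cancel₀ (by norm_num : (2:ℝ) ≠ 0), one_smul] at h10
    exact ⟨hu, hv, hprev⟩
  -- downward induction
  have main : ∀ j mm, mm + j = l → 1 ≤ mm →
      uu l mm ∈ K ∧ vv l mm ∈ K ∧ hh l mm ∈ K ∧ hh l (mm-1) ∈ K := by
    intro j
    induction j with
    | zero =>
      intro mm hmm h1
      have hml : mm = l := by omega
      subst hml
      obtain ⟨hu, hv, hp⟩ := step mm h1 (le_refl mm) hhl (fun h => absurd h (by omega))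
      exact ⟨hu, hv, hhl, hp⟩
    | succ j ih =>
      intro mm hmm h1
      obtain ⟨hu', hv', hh', hp'⟩ := ih (mm+1) (by omega) (by omega)
      have hhmm : hh l mm ∈ K := by
        have : mm + 1 - 1 = mm := rfl
        rwa [this] at hp'
      obtain ⟨hu, hv, hp⟩ := step mm h1 (by omega) hhmm (fun _ => hu')
      exact ⟨hu, hv, hhmm, hp⟩
  intro m hm1 hml
  obtain ⟨hu, hv, hhm, -⟩ := main (l - m) m (by omega) hm1
  refine ⟨?_, ?_, ?_⟩
  · rcases eq_or_ne m 1 with rfl | hm2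
    · rw [xB_one l]
      have := K.smul_mem (-1 : ℝ) hu
      rwa [neg_one_smul] at this
    · rw [xB_eq l m (by omega)]
      exact hu
  · rw [yB_eq l m hm1]
    exact hv
  · rw [hB_eq l m hm1]
    exact hhm
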